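/- For n ≥ 2, the number of sub-words of length f_{2n} of words in A (i.e. the cardinality of F(A, f_{2n}) = ⋃_{k≥1} F(A_k, f_{2n})) is at most 2^(f_{2n−3} + 2n) · 5^(n−1). -/

import Mathlib

/-- The two-letter alphabet. -/
inductive Letter : Type
  | a : Letter
  | b : Letter
deriving DecidableEq

/-- A word is a finite sequence of letters. -/
abbrev Word := List Letter

/-- Concatenation set `UV = {uv : u ∈ U, v ∈ V}`. -/
def concatSet (U V : Set Word) : Set Word := {w | ∃ u ∈ U, ∃ v ∈ V, w = u ++ v}

mutual
  /-- The sets `A_n` of inflated words (indexed so that `Aset 1 = {a}`). -/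
  def Aset : ℕ → Set Word
    | 0 => ∅
    | 1 => {[Letter.a]}
    | n + 2 => concatSet (Bset (n + 1)) (concatSet (Aset (n + 1)) (Aset (n + 1)))
  /-- The sets `B_n` of inflated words (indexed so that `Bset 1 = {b}`). -/
  def Bset : ℕ → Set Word
    | 0 => ∅
    | 1 => {[Letter.b]}
    | n + 2 => concatSet (Aset (n + 1)) (Bset (n + 1)) ∪ concatSet (Bset (n + 1)) (Aset (n + 1))
end

/-- The sub-word `w[a,b] = w_a w_{a+1} … w_b` (1-indexed). -/
def wordSlice (w : Word) (i j : ℕ) : Word := (w.drop (i - 1)).take (j - i + 1)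

/-- `W[a,b] = {w[a,b] : w ∈ W}`. -/
def setSlice (W : Set Word) (i j : ℕ) : Set Word := {x | ∃ w ∈ W, x = wordSlice w i j}

/-- `x` is a sub-word (contiguous factor) of `w`. -/
def IsFactor (x w : Word) : Prop := ∃ u v : Word, w = u ++ x ++ v

/-- `F(S, m)`: the set of all sub-words of length `m` of words in `S`. -/
def FactorSet (S : Set Word) (m : ℕ) : Set Word :=
  {x | x.length = m ∧ ∃ w ∈ S, IsFactor x w}

/-- `F(A, m) = ⋃_{n ≥ 1} F(A_n, m)`. -/
def FA (m : ℕ) : Set Word := ⋃ n ∈ {n : ℕ | 1 ≤ n}, FactorSet (Aset n) m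

/-- `F(B, m) = ⋃_{n ≥ 1} F(B_n, m)`. -/
def FB (m : ℕ) : Set Word := ⋃ n ∈ {n : ℕ | 1 ≤ n}, FactorSet (Bset n) m

/-- The golden mean `τ = (1 + √5)/2`. -/
noncomputable def tau : ℝ := (1 + Real.sqrt 5) / 2

instance : Fintype Letter := ⟨⟨{Letter.a, Letter.b}, by decide⟩, by intro x; cases x <;> decide⟩

open Letter

/-! ### Basic finiteness and length facts -/

lemma wordLenFin (m : ℕ) : {w : Word | w.length = m}.Finite := List.finite_length_eq Letter m

lemma concat_finite {U V : Set Word} (hU : U.Finite) (hV : V.Finite) :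
    (concatSet U V).Finite := by
  have : concatSet U V = Set.image2 (· ++ ·) U V := by
    ext w; simp [concatSet, Set.mem_image2, eq_comm]
  rw [this]
  exact hU.image2 _ hV

lemma ncard_concat_le {U V : Set Word} (hU : U.Finite) (hV : V.Finite) :
    (concatSet U V).ncard ≤ U.ncard * V.ncard := by
  have h2 : concatSet U V = Set.image2 (· ++ ·) U V := by
    ext w; simp [concatSet, Set.mem_image2, eq_comm]
  classical
  rw [h2, ← Set.image_prod]
  calc ((fun u v => u ++ v).uncurry '' (U ×ˢ V)).ncard ≤ (U ×ˢ V).ncard :=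
        Set.ncard_image_le (hU.prod hV)
    _ = U.ncard * V.ncard := by
        rw [← Nat.card_coe_set_eq, Nat.card_congr (Equiv.Set.prod U V), Nat.card_prod,
          Nat.card_coe_set_eq, Nat.card_coe_set_eq]

lemma fib_eq3 (a b c : ℕ) (h1 : a = c+2) (h2 : b = c+1) :
    Nat.fib a = Nat.fib c + Nat.fib b := by subst h1 h2; exact Nat.fib_add_two

lemma concat_mem {U V : Set Word} {u v : Word} (hu : u ∈ U) (hv : v ∈ V) :
    u ++ v ∈ concatSet U V := ⟨u, hu, v, hv, rfl⟩

lemma len_AB : ∀ n : ℕ, (∀ w ∈ Aset n, w.length = Nat.fib (2*n)) ∧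
    (∀ w ∈ Bset n, w.length = Nat.fib (2*n - 1)) := by
  intro n
  induction n using Nat.strong_induction_on with
  | _ n ih =>
    match n with
    | 0 => constructor <;> intro w hw <;> simp [Aset, Bset] at hw
    | 1 =>
      constructor <;> intro w hw <;> simp [Aset, Bset] at hw <;> simp [hw]
    | (n+2) =>
      obtain ⟨ihA, ihB⟩ := ih (n+1) (by omega)
      constructor
      · rintro w ⟨u, hu, v, ⟨v1, hv1, v2, hv2, rfl⟩, rfl⟩
        simp only [List.length_append, ihA _ hv1, ihA _ hv2, ihB _ hu]
        have h1 : 2*(n+1) - 1 = 2*n+1 := by omega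
        have h2 : 2*(n+2) = 2*n+4 := by omega
        have h3 : 2*(n+1) = 2*n+2 := by omega
        rw [h1, h2, h3]
        have e1 := fib_eq3 (2*n+4) (2*n+3) (2*n+2) (by omega) (by omega)
        have e2 := fib_eq3 (2*n+3) (2*n+2) (2*n+1) (by omega) (by omega)
        have e3 := fib_eq3 (2*n+2) (2*n+1) (2*n) (by omega) (by omega)
        omega
      · rintro w (⟨u, hu, v, hv, rfl⟩ | ⟨u, hu, v, hv, rfl⟩) <;>
          simp only [List.length_append] <;>
          [(rw [ihA _ hu, ihB _ hv]); (rw [ihB _ hu, ihA _ hv])] <;>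
        · have h1 : 2*(n+1) - 1 = 2*n+1 := by omega
          have h2 : 2*(n+2) - 1 = 2*n+3 := by omega
          have h3 : 2*(n+1) = 2*n+2 := by omega
          rw [h1, h2, h3]
          have e2 := fib_eq3 (2*n+3) (2*n+2) (2*n+1) (by omega) (by omega)
          have e3 := fib_eq3 (2*n+2) (2*n+1) (2*n) (by omega) (by omega)
          omega

lemma len_A {n : ℕ} {w : Word} (hw : w ∈ Aset n) : w.length = Nat.fib (2*n) :=
  (len_AB n).1 w hw

lemma len_B {n : ℕ} {w : Word} (hw : w ∈ Bset n) : w.length = Nat.fib (2*n - 1) :=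
  (len_AB n).2 w hw

lemma finite_A (n : ℕ) : (Aset n).Finite :=
  (wordLenFin (Nat.fib (2*n))).subset (fun _ hw => len_A hw)

lemma finite_B (n : ℕ) : (Bset n).Finite :=
  (wordLenFin (Nat.fib (2*n - 1))).subset (fun _ hw => len_B hw)

lemma nonempty_AB : ∀ n : ℕ, 1 ≤ n → (Aset n).Nonempty ∧ (Bset n).Nonempty := by
  intro n
  induction n using Nat.strong_induction_on with
  | _ n ih =>
    match n with
    | 0 => intro h; exact absurd h (by omega)
    | 1 => intro _; exact ⟨⟨_, rfl⟩, ⟨_, rfl⟩⟩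
    | (n+2) =>
      intro _
      obtain ⟨⟨u, hu⟩, ⟨v, hv⟩⟩ := ih (n+1) (by omega) (by omega)
      exact ⟨⟨v ++ (u ++ u), concat_mem hv (concat_mem hu hu)⟩,
        ⟨u ++ v, Or.inl (concat_mem hu hv)⟩⟩

/-! ### The exponent function `eF` -/

noncomputable def c5 : ℝ := 2 + Real.sqrt 5

lemma c5_pos : 0 < c5 := by
  have := Real.sqrt_nonneg 5
  unfold c5; linarith

lemma div_c5_nonneg (t : ℕ) : 0 ≤ (t:ℝ)/c5 := div_nonneg (by positivity) c5_pos.le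

noncomputable def eF (t : ℕ) : ℕ := ⌊(t : ℝ) / c5⌋₊

lemma eF_superadd (s t : ℕ) : eF s + eF t ≤ eF (s + t) := by
  unfold eF
  rw [Nat.le_floor_iff (div_c5_nonneg _)]
  push_cast
  have h1 := Nat.floor_le (div_c5_nonneg s)
  have h2 := Nat.floor_le (div_c5_nonneg t)
  have : (s:ℝ)/c5 + (t:ℝ)/c5 = ((s:ℝ)+(t:ℝ))/c5 := by ring
  linarith

lemma eF_mono {s t : ℕ} (h : s ≤ t) : eF s ≤ eF t :=
  Nat.floor_le_floor ((div_le_div_iff_of_pos_right c5_pos).mpr (by exact_mod_cast h))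

lemma lucas_sq : ∀ m : ℕ, (2*(Nat.fib (m+1) : ℤ) - Nat.fib m)^2 = 5*(Nat.fib m : ℤ)^2 + 4*(-1)^m := by
  intro m
  induction m with
  | zero => simp
  | succ m ih =>
    have hF : (Nat.fib (m+2) : ℤ) = Nat.fib m + Nat.fib (m+1) := by
      exact_mod_cast (Nat.fib_add_two (n := m))
    have h : m+1+1 = m+2 := rfl
    rw [h, hF]
    linear_combination -ih

lemma lucas_even (m : ℕ) :
    (2*(Nat.fib (2*m+1) : ℤ) - Nat.fib (2*m))^2 = 5*(Nat.fib (2*m) : ℤ)^2 + 4 := by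
  have h := lucas_sq (2*m)
  rw [show ((-1:ℤ))^(2*m) = 1 by rw [pow_mul]; norm_num] at h
  linarith

lemma lucas_odd (m : ℕ) :
    (2*(Nat.fib (2*m+2) : ℤ) - Nat.fib (2*m+1))^2 = 5*(Nat.fib (2*m+1) : ℤ)^2 - 4 := by
  have h := lucas_sq (2*m+1)
  rw [show (2*m+1+1) = 2*m+2 from rfl] at h
  rw [show ((-1:ℤ))^(2*m+1) = -1 by rw [pow_succ, pow_mul]; norm_num] at h
  linarith

lemma sqrt5_le_of_sq {a b : ℤ} (hb : 0 ≤ b) (h : 5*b^2 ≤ a^2) (ha : 0 ≤ a) :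
    Real.sqrt 5 * (b:ℝ) ≤ (a:ℝ) := by
  have hbR : (0:ℝ) ≤ (b:ℝ) := by exact_mod_cast hb
  have h5 : Real.sqrt 5 * (b:ℝ) = Real.sqrt (5*(b:ℝ)^2) := by
    rw [Real.sqrt_mul (by norm_num), Real.sqrt_sq hbR]
  have haR : Real.sqrt ((a:ℝ)^2) = (a:ℝ) := Real.sqrt_sq (by exact_mod_cast ha)
  rw [h5, ← haR]
  apply Real.sqrt_le_sqrt
  exact_mod_cast h

lemma lt_sqrt5_of_sq {a b : ℤ} (ha : 0 ≤ a) (hb : 0 ≤ b) (h : a^2 < 5*b^2) :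
    (a:ℝ) < Real.sqrt 5 * (b:ℝ) := by
  have hbR : (0:ℝ) ≤ (b:ℝ) := by exact_mod_cast hb
  have h5 : Real.sqrt 5 * (b:ℝ) = Real.sqrt (5*(b:ℝ)^2) := by
    rw [Real.sqrt_mul (by norm_num), Real.sqrt_sq hbR]
  have haR : Real.sqrt ((a:ℝ)^2) = (a:ℝ) := Real.sqrt_sq (by exact_mod_cast ha)
  rw [h5, ← haR]
  apply Real.sqrt_lt_sqrt (by positivity)
  exact_mod_cast h

lemma fib3 (m : ℕ) : Nat.fib (m+3) = 2 * Nat.fib (m+1) + Nat.fib m := by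
  have e1 := fib_eq3 (m+3) (m+2) (m+1) (by omega) (by omega)
  have e2 := fib_eq3 (m+2) (m+1) m (by omega) (by omega)
  omega

lemma fib_le_fib2 (m : ℕ) : (Nat.fib m : ℤ) ≤ 2 * Nat.fib (m+1) := by
  have := Nat.fib_le_fib_succ (n := m)
  have h : (Nat.fib m : ℤ) ≤ Nat.fib (m+1) := by exact_mod_cast this
  have h2 : (0:ℤ) ≤ Nat.fib (m+1) := by positivity
  linarith

/-- E2: `eF (fib (2m+3)) ≥ fib 2m`. -/
lemma eF_odd_lower (m : ℕ) : Nat.fib (2*m) ≤ eF (Nat.fib (2*m+3)) := by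
  unfold eF
  rw [Nat.le_floor_iff (div_c5_nonneg _), le_div_iff₀ c5_pos]
  unfold c5
  have hsq : 5*((Nat.fib (2*m) : ℤ))^2 ≤ (2*(Nat.fib (2*m+1) : ℤ) - Nat.fib (2*m))^2 := by
    rw [lucas_even m]; omega
  have hs5 := sqrt5_le_of_sq (by positivity) hsq (by linarith [fib_le_fib2 (2*m)])
  have h3 : (Nat.fib (2*m+3) : ℝ) = 2*(Nat.fib (2*m+1):ℝ) + (Nat.fib (2*m) : ℝ) := by
    exact_mod_cast congrArg (Nat.cast (R := ℝ)) (fib3 (2*m))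
  push_cast at hs5 ⊢
  rw [h3]
  linarith

/-- E1: `eF (fib (2m+4)) < fib (2m+1)`. -/
lemma eF_even_upper (m : ℕ) : eF (Nat.fib (2*m+4)) < Nat.fib (2*m+1) := by
  unfold eF
  rw [Nat.floor_lt (div_c5_nonneg _), div_lt_iff₀ c5_pos]
  unfold c5
  have hsq : (2*(Nat.fib (2*m+2) : ℤ) - Nat.fib (2*m+1))^2 < 5*((Nat.fib (2*m+1) : ℤ))^2 := by
    rw [lucas_odd m]
    have : (0:ℤ) < Nat.fib (2*m+1) := by
      have := Nat.fib_pos.mpr (show 0 < 2*m+1 by omega); exact_mod_cast this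
    omega
  have hs5 := lt_sqrt5_of_sq (by linarith [fib_le_fib2 (2*m+1)]) (by positivity) hsq
  have h3 : (Nat.fib (2*m+4) : ℝ) = 2*(Nat.fib (2*m+2):ℝ) + (Nat.fib (2*m+1) : ℝ) := by
    exact_mod_cast congrArg (Nat.cast (R := ℝ)) (fib3 (2*m+1))
  push_cast at hs5 ⊢
  rw [h3]
  linarith

/-- E3: `fib (2m+1) ≤ eF (fib (2m+4)) + 1`. -/
lemma eF_even_lower (m : ℕ) : Nat.fib (2*m+1) ≤ eF (Nat.fib (2*m+4)) + 1 := by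
  have hpos : 1 ≤ Nat.fib (2*m+1) := Nat.fib_pos.mpr (by omega)
  suffices h : Nat.fib (2*m+1) - 1 ≤ eF (Nat.fib (2*m+4)) by omega
  unfold eF
  rw [Nat.le_floor_iff (div_c5_nonneg _), le_div_iff₀ c5_pos]
  unfold c5
  have hfa : (Nat.fib (2*m+1) : ℤ) ≤ 2*(Nat.fib (2*m+2) : ℤ) - Nat.fib (2*m+1) := by
    have h1 : (Nat.fib (2*m+1) : ℤ) ≤ (Nat.fib (2*m+2) : ℤ) := by
      exact_mod_cast Nat.fib_le_fib_succ (n := 2*m+1)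
    linarith
  have hsq : 5*((Nat.fib (2*m+1) : ℤ) - 1)^2 ≤ ((2*(Nat.fib (2*m+2) : ℤ) - Nat.fib (2*m+1)) + 2)^2 := by
    have hl := lucas_odd m
    have hf1 : (1:ℤ) ≤ Nat.fib (2*m+1) := by exact_mod_cast hpos
    nlinarith
  have hb0 : (0:ℤ) ≤ (Nat.fib (2*m+1) : ℤ) - 1 := by
    have : (1:ℤ) ≤ Nat.fib (2*m+1) := by exact_mod_cast hpos
    linarith
  have ha0 : (0:ℤ) ≤ (2*(Nat.fib (2*m+2) : ℤ) - Nat.fib (2*m+1)) + 2 := by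
    linarith [fib_le_fib2 (2*m+1)]
  have hs5 := sqrt5_le_of_sq hb0 hsq ha0
  have h3 : (Nat.fib (2*m+4) : ℝ) = 2*(Nat.fib (2*m+2):ℝ) + (Nat.fib (2*m+1) : ℝ) := by
    exact_mod_cast congrArg (Nat.cast (R := ℝ)) (fib3 (2*m+1))
  have hc : ((Nat.fib (2*m+1) - 1 : ℕ) : ℝ) = (Nat.fib (2*m+1) : ℝ) - 1 := by
    push_cast [hpos]; ring
  push_cast at hs5
  rw [h3, hc]
  linarith

/-! ### Prefix and suffix sets -/

def PreSet (W : Set Word) (t : ℕ) : Set Word := {p | p.length = t ∧ ∃ w ∈ W, p <+: w}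

def SufSet (W : Set Word) (t : ℕ) : Set Word := {p | p.length = t ∧ ∃ w ∈ W, p <:+ w}

lemma preSet_finite (W : Set Word) (t : ℕ) : (PreSet W t).Finite :=
  (wordLenFin t).subset (fun _ h => h.1)

lemma sufSet_finite (W : Set Word) (t : ℕ) : (SufSet W t).Finite :=
  (wordLenFin t).subset (fun _ h => h.1)

lemma ncard_preSet_le {W : Set Word} (hW : W.Finite) (t : ℕ) :
    (PreSet W t).ncard ≤ W.ncard := by
  have hsub : PreSet W t ⊆ (fun w : Word => w.take t) '' W := by
    rintro p ⟨hlen, w, hw, hpre⟩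
    exact ⟨w, hw, by rw [List.prefix_iff_eq_take] at hpre; simp only; rw [hpre, hlen]⟩
  exact le_trans (Set.ncard_le_ncard hsub (hW.image _)) (Set.ncard_image_le hW)

lemma ncard_sufSet_le {W : Set Word} (hW : W.Finite) (t : ℕ) :
    (SufSet W t).ncard ≤ W.ncard := by
  have hsub : SufSet W t ⊆ (fun w : Word => w.drop (w.length - t)) '' W := by
    rintro p ⟨hlen, w, hw, hsuf⟩
    exact ⟨w, hw, by rw [List.suffix_iff_eq_drop] at hsuf; simp only; rw [hsuf, hlen]⟩
  exact le_trans (Set.ncard_le_ncard hsub (hW.image _)) (Set.ncard_image_le hW)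

lemma preSet_union (X Y : Set Word) (t : ℕ) :
    PreSet (X ∪ Y) t = PreSet X t ∪ PreSet Y t := by
  ext p; constructor
  · rintro ⟨hlen, w, (hw | hw), hpre⟩
    · exact Or.inl ⟨hlen, w, hw, hpre⟩
    · exact Or.inr ⟨hlen, w, hw, hpre⟩
  · rintro (⟨hlen, w, hw, hpre⟩ | ⟨hlen, w, hw, hpre⟩)
    · exact ⟨hlen, w, Or.inl hw, hpre⟩
    · exact ⟨hlen, w, Or.inr hw, hpre⟩

lemma sufSet_union (X Y : Set Word) (t : ℕ) :
    SufSet (X ∪ Y) t = SufSet X t ∪ SufSet Y t := by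
  ext p; constructor
  · rintro ⟨hlen, w, (hw | hw), hsuf⟩
    · exact Or.inl ⟨hlen, w, hw, hsuf⟩
    · exact Or.inr ⟨hlen, w, hw, hsuf⟩
  · rintro (⟨hlen, w, hw, hsuf⟩ | ⟨hlen, w, hw, hsuf⟩)
    · exact ⟨hlen, w, Or.inl hw, hsuf⟩
    · exact ⟨hlen, w, Or.inr hw, hsuf⟩

lemma preSet_concat_short {U V : Set Word} {L t : ℕ} (hlen : ∀ u ∈ U, u.length = L)
    (ht : t ≤ L) : PreSet (concatSet U V) t ⊆ PreSet U t := by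
  rintro p ⟨hplen, w, ⟨u, hu, v, hv, rfl⟩, hpre⟩
  rw [List.prefix_iff_eq_take, hplen, List.take_append] at hpre
  have h1 : t - u.length = 0 := by rw [hlen u hu]; omega
  rw [h1, List.take_zero, List.append_nil] at hpre
  exact ⟨hplen, u, hu, hpre ▸ List.take_prefix t u⟩

lemma preSet_concat_long {U V : Set Word} {L t : ℕ} (hlen : ∀ u ∈ U, u.length = L)
    (ht : L < t) : PreSet (concatSet U V) t ⊆ concatSet U (PreSet V (t - L)) := by
  rintro p ⟨hplen, w, ⟨u, hu, v, hv, rfl⟩, hpre⟩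
  have huL : u.length = L := hlen u hu
  have hple : t ≤ u.length + v.length := by
    have := hpre.length_le; simp at this; omega
  rw [List.prefix_iff_eq_take] at hpre
  rw [hplen] at hpre
  rw [List.take_append] at hpre
  have h1 : u.take t = u := List.take_of_length_le (by omega)
  rw [h1, huL] at hpre
  refine ⟨u, hu, v.take (t - L), ⟨?_, v, hv, List.take_prefix _ _⟩, hpre⟩
  rw [List.length_take]
  omega

lemma sufSet_concat_short {U V : Set Word} {L t : ℕ} (hlen : ∀ v ∈ V, v.length = L)
    (ht : t ≤ L) : SufSet (concatSet U V) t ⊆ SufSet V t := by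
  rintro p ⟨hplen, w, ⟨u, hu, v, hv, rfl⟩, hsuf⟩
  have hvL : v.length = L := hlen v hv
  rw [List.suffix_iff_eq_drop, hplen, List.length_append,
    List.drop_append] at hsuf
  have h1 : u.drop (u.length + v.length - t) = [] := List.drop_eq_nil_of_le (by omega)
  have h2 : u.length + v.length - t - u.length = v.length - t := by omega
  rw [h1, h2, List.nil_append] at hsuf
  exact ⟨hplen, v, hv, hsuf ▸ List.drop_suffix _ _⟩

lemma sufSet_concat_long {U V : Set Word} {L t : ℕ} (hlen : ∀ v ∈ V, v.length = L)
    (ht : L < t) : SufSet (concatSet U V) t ⊆ concatSet (SufSet U (t - L)) V := by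
  rintro p ⟨hplen, w, ⟨u, hu, v, hv, rfl⟩, hsuf⟩
  have hvL : v.length = L := hlen v hv
  have hple : t ≤ u.length + v.length := by
    have := hsuf.length_le; simp at this; omega
  rw [List.suffix_iff_eq_drop] at hsuf
  rw [hplen, List.length_append, List.drop_append] at hsuf
  have h2 : u.length + v.length - t - u.length = 0 := by omega
  rw [h2, List.drop_zero] at hsuf
  refine ⟨u.drop (u.length + v.length - t), ⟨?_, u, hu, List.drop_suffix _ _⟩, v, hv, hsuf⟩
  rw [List.length_drop]
  omega

/-! ### Cardinality bounds -/

lemma pow2_le {p r : ℕ} (h : p ≤ r) : (2:ℕ)^p ≤ 2^r := Nat.pow_le_pow_right (by norm_num) h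

lemma ncard_le_pow_of_subset {S T : Set Word} (hS : S ⊆ T) (hT : T.Finite) {p r : ℕ}
    (h : T.ncard ≤ 2^p) (hpr : p ≤ r) : S.ncard ≤ 2^r :=
  le_trans (Set.ncard_le_ncard hS hT) (le_trans h (pow2_le hpr))

lemma ncard_concat_pow {U V S : Set Word} (hS : S ⊆ concatSet U V) (hU : U.Finite)
    (hV : V.Finite) {p q r : ℕ} (hU2 : U.ncard ≤ 2^p) (hV2 : V.ncard ≤ 2^q)
    (hpq : p + q ≤ r) : S.ncard ≤ 2^r :=
  le_trans (Set.ncard_le_ncard hS (concat_finite hU hV))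
    (le_trans (ncard_concat_le hU hV)
      (le_trans (Nat.mul_le_mul hU2 hV2) (by rw [← pow_add]; exact pow2_le hpq)))

lemma ncard_A1 : (Aset 1).ncard = 1 := by
  have : Aset 1 = {[Letter.a]} := by simp [Aset]
  rw [this]; exact Set.ncard_singleton _

lemma ncard_B1 : (Bset 1).ncard = 1 := by
  have : Bset 1 = {[Letter.b]} := by simp [Bset]
  rw [this]; exact Set.ncard_singleton _

lemma cardAB : ∀ m : ℕ, (Aset (m+2)).ncard ≤ 2^(Nat.fib (2*m+1) - 1) ∧
    (Bset (m+2)).ncard ≤ 2^(Nat.fib (2*m) + 1) := by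
  intro m
  induction m with
  | zero =>
    constructor
    · have h : Aset 2 = concatSet (Bset 1) (concatSet (Aset 1) (Aset 1)) := by
        have h := Aset.eq_3 0; simp only [Nat.zero_add] at h; exact h
      simp only [h]
      refine ncard_concat_pow (le_refl _) (finite_B 1) (concat_finite (finite_A 1) (finite_A 1))
        (p := 0) (q := 0) (by rw [ncard_B1]; norm_num) ?_ (by norm_num)
      calc (concatSet (Aset 1) (Aset 1)).ncard ≤ (Aset 1).ncard * (Aset 1).ncard :=
            ncard_concat_le (finite_A 1) (finite_A 1)
        _ ≤ 2^0 := by rw [ncard_A1]; norm_num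
    · have h : Bset 2 = concatSet (Aset 1) (Bset 1) ∪ concatSet (Bset 1) (Aset 1) := by
        have h := Bset.eq_3 0; simp only [Nat.zero_add] at h; exact h
      rw [h]
      refine le_trans (Set.ncard_union_le _ _) ?_
      have h1 : (concatSet (Aset 1) (Bset 1)).ncard ≤ 1 := by
        refine le_trans (ncard_concat_le (finite_A 1) (finite_B 1)) ?_
        rw [ncard_A1, ncard_B1]
      have h2 : (concatSet (Bset 1) (Aset 1)).ncard ≤ 1 := by
        refine le_trans (ncard_concat_le (finite_B 1) (finite_A 1)) ?_
        rw [ncard_A1, ncard_B1]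
      simp only [Nat.mul_zero, Nat.fib_zero, pow_one]
      omega
  | succ m ih =>
    obtain ⟨ihA, ihB⟩ := ih
    have hfpos : 1 ≤ Nat.fib (2*m+1) := Nat.fib_pos.mpr (by omega)
    constructor
    · have h : Aset (m+3) = concatSet (Bset (m+2)) (concatSet (Aset (m+2)) (Aset (m+2))) := by
        have h := Aset.eq_3 (m+1); simpa using h
      rw [h]
      refine ncard_concat_pow (le_refl _) (finite_B (m+2))
        (concat_finite (finite_A (m+2)) (finite_A (m+2)))
        ihB (q := 2*(Nat.fib (2*m+1) - 1)) ?_ ?_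
      · refine le_trans (ncard_concat_le (finite_A (m+2)) (finite_A (m+2))) ?_
        rw [two_mul, pow_add]
        exact Nat.mul_le_mul ihA ihA
      · have h3 := fib3 (2*m)
        have : 2*(m+1)+1 = 2*m+3 := by omega
        rw [this]
        omega
    · have h : Bset (m+3) = concatSet (Aset (m+2)) (Bset (m+2)) ∪
          concatSet (Bset (m+2)) (Aset (m+2)) := by
        have h := Bset.eq_3 (m+1); simpa using h
      rw [h]
      refine le_trans (Set.ncard_union_le _ _) ?_
      have e3 := fib_eq3 (2*m+2) (2*m+1) (2*m) (by omega) (by omega)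
      have hexp : (Nat.fib (2*m+1) - 1) + (Nat.fib (2*m) + 1) = Nat.fib (2*m+2) := by omega
      have h1 : (concatSet (Aset (m+2)) (Bset (m+2))).ncard ≤ 2^(Nat.fib (2*m+2)) := by
        refine le_trans (ncard_concat_le (finite_A (m+2)) (finite_B (m+2))) ?_
        calc _ ≤ 2^(Nat.fib (2*m+1) - 1) * 2^(Nat.fib (2*m) + 1) := Nat.mul_le_mul ihA ihB
          _ = 2^(Nat.fib (2*m+2)) := by rw [← pow_add, hexp]
      have h2 : (concatSet (Bset (m+2)) (Aset (m+2))).ncard ≤ 2^(Nat.fib (2*m+2)) := by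
        refine le_trans (ncard_concat_le (finite_B (m+2)) (finite_A (m+2))) ?_
        calc _ ≤ 2^(Nat.fib (2*m) + 1) * 2^(Nat.fib (2*m+1) - 1) := Nat.mul_le_mul ihB ihA
          _ = 2^(Nat.fib (2*m+2)) := by rw [← pow_add]; rw [show (Nat.fib (2*m) + 1) + (Nat.fib (2*m+1) - 1) = Nat.fib (2*m+2) by omega]
      have : 2*(m+1) = 2*m+2 := by omega
      rw [this]
      calc _ ≤ 2^(Nat.fib (2*m+2)) + 2^(Nat.fib (2*m+2)) := Nat.add_le_add h1 h2
        _ = 2^(Nat.fib (2*m+2) + 1) := by rw [pow_succ]; omega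

/-! ### Main prefix/suffix counting bounds -/

lemma AsetSucc (k : ℕ) :
    Aset (k+2) = concatSet (Bset (k+1)) (concatSet (Aset (k+1)) (Aset (k+1))) := by
  have h := Aset.eq_3 k; simpa using h

lemma BsetSucc (k : ℕ) :
    Bset (k+2) = concatSet (Aset (k+1)) (Bset (k+1)) ∪ concatSet (Bset (k+1)) (Aset (k+1)) := by
  have h := Bset.eq_3 k; simpa using h

lemma eF_gap {L t : ℕ} (h : L ≤ t) : eF L + eF (t - L) ≤ eF t := by
  have h2 := eF_superadd L (t - L)
  rwa [Nat.add_sub_cancel' h] at h2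

lemma PB : ∀ m : ℕ, ∀ t : ℕ,
    (PreSet (Aset (m+1)) t).ncard ≤ 2^(eF t + m) ∧
    (PreSet (Bset (m+1)) t).ncard ≤ 2^(eF t + m + 1) ∧
    (SufSet (Aset (m+1)) t).ncard ≤ 2^(eF t + m) ∧
    (SufSet (Bset (m+1)) t).ncard ≤ 2^(eF t + m + 1) := by
  intro m
  induction m with
  | zero =>
    intro t
    have hA : (PreSet (Aset 1) t).ncard ≤ 1 := by
      have := ncard_preSet_le (finite_A 1) t; rwa [ncard_A1] at this
    have hB : (PreSet (Bset 1) t).ncard ≤ 1 := by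
      have := ncard_preSet_le (finite_B 1) t; rwa [ncard_B1] at this
    have hA' : (SufSet (Aset 1) t).ncard ≤ 1 := by
      have := ncard_sufSet_le (finite_A 1) t; rwa [ncard_A1] at this
    have hB' : (SufSet (Bset 1) t).ncard ≤ 1 := by
      have := ncard_sufSet_le (finite_B 1) t; rwa [ncard_B1] at this
    exact ⟨le_trans hA (Nat.one_le_two_pow), le_trans hB (Nat.one_le_two_pow),
      le_trans hA' (Nat.one_le_two_pow), le_trans hB' (Nat.one_le_two_pow)⟩
  | succ m ih =>
    match m, ih with
    | 0, _ =>
      intro t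
      have hcA : (Aset 2).ncard ≤ 1 := by
        have := (cardAB 0).1; simpa using this
      have hcB : (Bset 2).ncard ≤ 2 := by
        have := (cardAB 0).2; simpa using this
      have hA : (PreSet (Aset 2) t).ncard ≤ 2^(eF t + 1) :=
        le_trans (le_trans (ncard_preSet_le (finite_A 2) t) hcA) Nat.one_le_two_pow
      have hB : (PreSet (Bset 2) t).ncard ≤ 2^(eF t + 2) := by
        refine le_trans (le_trans (ncard_preSet_le (finite_B 2) t) hcB) ?_
        calc (2:ℕ) = 2^1 := rfl
          _ ≤ 2^(eF t + 2) := pow2_le (by omega)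
      have hA' : (SufSet (Aset 2) t).ncard ≤ 2^(eF t + 1) :=
        le_trans (le_trans (ncard_sufSet_le (finite_A 2) t) hcA) Nat.one_le_two_pow
      have hB' : (SufSet (Bset 2) t).ncard ≤ 2^(eF t + 2) := by
        refine le_trans (le_trans (ncard_sufSet_le (finite_B 2) t) hcB) ?_
        calc (2:ℕ) = 2^1 := rfl
          _ ≤ 2^(eF t + 2) := pow2_le (by omega)
      exact ⟨hA, hB, hA', hB'⟩
    | (k+1), ih =>
      -- level k+3 from level k+2
      have hpA : ∀ t', (PreSet (Aset (k+2)) t').ncard ≤ 2^(eF t' + (k+1)) :=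
        fun t' => (ih t').1
      have hpB : ∀ t', (PreSet (Bset (k+2)) t').ncard ≤ 2^(eF t' + (k+2)) := by
        intro t'; have := (ih t').2.1
        rwa [show eF t' + (k+1) + 1 = eF t' + (k+2) by omega] at this
      have hsA : ∀ t', (SufSet (Aset (k+2)) t').ncard ≤ 2^(eF t' + (k+1)) :=
        fun t' => (ih t').2.2.1
      have hsB : ∀ t', (SufSet (Bset (k+2)) t').ncard ≤ 2^(eF t' + (k+2)) := by
        intro t'; have := (ih t').2.2.2
        rwa [show eF t' + (k+1) + 1 = eF t' + (k+2) by omega] at this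
      have hα : (Aset (k+2)).ncard ≤ 2^(Nat.fib (2*k+1) - 1) := (cardAB k).1
      have hβ : (Bset (k+2)).ncard ≤ 2^(Nat.fib (2*k) + 1) := (cardAB k).2
      have hfib1 : 1 ≤ Nat.fib (2*k+1) := Nat.fib_pos.mpr (by omega)
      have hEb : Nat.fib (2*k) ≤ eF (Nat.fib (2*k+3)) := eF_odd_lower k
      have hEa : Nat.fib (2*k+1) ≤ eF (Nat.fib (2*k+4)) + 1 := eF_even_lower k
      have hlenB : ∀ w ∈ Bset (k+2), w.length = Nat.fib (2*k+3) := by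
        intro w hw; have := len_B hw
        rwa [show 2*(k+2)-1 = 2*k+3 by omega] at this
      have hlenA : ∀ w ∈ Aset (k+2), w.length = Nat.fib (2*k+4) := by
        intro w hw; have := len_A hw
        rwa [show 2*(k+2) = 2*k+4 by omega] at this
      have hlenAA : ∀ w ∈ concatSet (Aset (k+2)) (Aset (k+2)),
          w.length = Nat.fib (2*k+4) + Nat.fib (2*k+4) := by
        rintro w ⟨u, hu, v, hv, rfl⟩
        rw [List.length_append, hlenA u hu, hlenA v hv]
      have hfinAA : (concatSet (Aset (k+2)) (Aset (k+2))).Finite :=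
        concat_finite (finite_A (k+2)) (finite_A (k+2))
      have hAA2 : (concatSet (Aset (k+2)) (Aset (k+2))).ncard ≤
          2^((Nat.fib (2*k+1) - 1) + (Nat.fib (2*k+1) - 1)) := by
        refine le_trans (ncard_concat_le (finite_A (k+2)) (finite_A (k+2))) ?_
        rw [pow_add]; exact Nat.mul_le_mul hα hα
      -- prefix bound for the AA block
      have hpAA : ∀ t', (PreSet (concatSet (Aset (k+2)) (Aset (k+2))) t').ncard ≤
          2^(eF t' + (k+1)) := by
        intro t'
        by_cases h' : t' ≤ Nat.fib (2*k+4)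
        · exact ncard_le_pow_of_subset (preSet_concat_short hlenA h') (preSet_finite _ _)
            (hpA t') (le_refl _)
        · push_neg at h'
          refine ncard_concat_pow (preSet_concat_long hlenA h') (finite_A (k+2))
            (preSet_finite _ _) hα (hpA (t' - Nat.fib (2*k+4))) ?_
          have hg := eF_gap (le_of_lt h' : Nat.fib (2*k+4) ≤ t')
          omega
      -- suffix bound for the AA block
      have hsAA : ∀ t', (SufSet (concatSet (Aset (k+2)) (Aset (k+2))) t').ncard ≤
          2^(eF t' + (k+1)) := by
        intro t'
        by_cases h' : t' ≤ Nat.fib (2*k+4)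
        · exact ncard_le_pow_of_subset (sufSet_concat_short hlenA h') (sufSet_finite _ _)
            (hsA t') (le_refl _)
        · push_neg at h'
          refine ncard_concat_pow (sufSet_concat_long hlenA h') (sufSet_finite _ _)
            (finite_A (k+2)) (hsA (t' - Nat.fib (2*k+4))) hα ?_
          have hg := eF_gap (le_of_lt h' : Nat.fib (2*k+4) ≤ t')
          omega
      intro t
      refine ⟨?_, ?_, ?_, ?_⟩
      -- prefix A level k+3
      · rw [show k+1+1+1 = (k+1)+2 from rfl, AsetSucc (k+1)]
        by_cases ht : t ≤ Nat.fib (2*k+3)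
        · refine ncard_le_pow_of_subset (preSet_concat_short hlenB ht) (preSet_finite _ _)
            (hpB t) (by omega)
        · push_neg at ht
          refine ncard_concat_pow (preSet_concat_long hlenB ht) (finite_B (k+2))
            (preSet_finite _ _) hβ (hpAA (t - Nat.fib (2*k+3))) ?_
          have hg := eF_gap (le_of_lt ht : Nat.fib (2*k+3) ≤ t)
          omega
      -- prefix B level k+3
      · rw [show k+1+1+1 = (k+1)+2 from rfl, BsetSucc (k+1), preSet_union]
        refine le_trans (Set.ncard_union_le _ _) ?_
        have h1 : (PreSet (concatSet (Aset (k+2)) (Bset (k+2))) t).ncard ≤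
            2^(eF t + (k+2)) := by
          by_cases ht : t ≤ Nat.fib (2*k+4)
          · exact ncard_le_pow_of_subset (preSet_concat_short hlenA ht) (preSet_finite _ _)
              (hpA t) (by omega)
          · push_neg at ht
            refine ncard_concat_pow (preSet_concat_long hlenA ht) (finite_A (k+2))
              (preSet_finite _ _) hα (hpB (t - Nat.fib (2*k+4))) ?_
            have hg := eF_gap (le_of_lt ht : Nat.fib (2*k+4) ≤ t)
            omega
        have h2 : (PreSet (concatSet (Bset (k+2)) (Aset (k+2))) t).ncard ≤
            2^(eF t + (k+2)) := by
          by_cases ht : t ≤ Nat.fib (2*k+3)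
          · exact ncard_le_pow_of_subset (preSet_concat_short hlenB ht) (preSet_finite _ _)
              (hpB t) (le_refl _)
          · push_neg at ht
            refine ncard_concat_pow (preSet_concat_long hlenB ht) (finite_B (k+2))
              (preSet_finite _ _) hβ (hpA (t - Nat.fib (2*k+3))) ?_
            have hg := eF_gap (le_of_lt ht : Nat.fib (2*k+3) ≤ t)
            omega
        calc _ ≤ 2^(eF t + (k+2)) + 2^(eF t + (k+2)) := Nat.add_le_add h1 h2
          _ ≤ 2^(eF t + (k+1) + 1 + 1) := by
              rw [show eF t + (k+1) + 1 + 1 = (eF t + (k+2)) + 1 by omega, pow_succ]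
              omega
      -- suffix A level k+3
      · rw [show k+1+1+1 = (k+1)+2 from rfl, AsetSucc (k+1)]
        by_cases ht : t ≤ Nat.fib (2*k+4) + Nat.fib (2*k+4)
        · exact ncard_le_pow_of_subset (sufSet_concat_short hlenAA ht) (sufSet_finite _ _)
            (hsAA t) (by omega)
        · push_neg at ht
          refine ncard_concat_pow (sufSet_concat_long hlenAA ht) (sufSet_finite _ _)
            hfinAA (hsB (t - (Nat.fib (2*k+4) + Nat.fib (2*k+4)))) hAA2 ?_
          have hg := eF_gap (le_of_lt ht : Nat.fib (2*k+4) + Nat.fib (2*k+4) ≤ t)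
          have hg2 := eF_superadd (Nat.fib (2*k+4)) (Nat.fib (2*k+4))
          omega
      -- suffix B level k+3
      · rw [show k+1+1+1 = (k+1)+2 from rfl, BsetSucc (k+1), sufSet_union]
        refine le_trans (Set.ncard_union_le _ _) ?_
        have h1 : (SufSet (concatSet (Aset (k+2)) (Bset (k+2))) t).ncard ≤
            2^(eF t + (k+2)) := by
          by_cases ht : t ≤ Nat.fib (2*k+3)
          · exact ncard_le_pow_of_subset (sufSet_concat_short hlenB ht) (sufSet_finite _ _)
              (hsB t) (le_refl _)
          · push_neg at ht
            refine ncard_concat_pow (sufSet_concat_long hlenB ht) (sufSet_finite _ _)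
              (finite_B (k+2)) (hsA (t - Nat.fib (2*k+3))) hβ ?_
            have hg := eF_gap (le_of_lt ht : Nat.fib (2*k+3) ≤ t)
            omega
        have h2 : (SufSet (concatSet (Bset (k+2)) (Aset (k+2))) t).ncard ≤
            2^(eF t + (k+2)) := by
          by_cases ht : t ≤ Nat.fib (2*k+4)
          · exact ncard_le_pow_of_subset (sufSet_concat_short hlenA ht) (sufSet_finite _ _)
              (hsA t) (by omega)
          · push_neg at ht
            refine ncard_concat_pow (sufSet_concat_long hlenA ht) (sufSet_finite _ _)
              (finite_A (k+2)) (hsB (t - Nat.fib (2*k+4))) hα ?_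
            have hg := eF_gap (le_of_lt ht : Nat.fib (2*k+4) ≤ t)
            omega
        calc _ ≤ 2^(eF t + (k+2)) + 2^(eF t + (k+2)) := Nat.add_le_add h1 h2
          _ ≤ 2^(eF t + (k+1) + 1 + 1) := by
              rw [show eF t + (k+1) + 1 + 1 = (eF t + (k+2)) + 1 by omega, pow_succ]
              omega

/-! ### Factors and join decompositions -/

lemma isFactor_len {x w : Word} (h : IsFactor x w) : x.length ≤ w.length := by
  obtain ⟨s, t, rfl⟩ := h
  simp only [List.length_append]
  omega

lemma isFactor_eq {x w : Word} (h : IsFactor x w) (hl : x.length = w.length) : x = w := by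
  obtain ⟨s, t, rfl⟩ := h
  simp only [List.length_append] at hl
  have hs : s = [] := List.eq_nil_of_length_eq_zero (by omega)
  have ht : t = [] := List.eq_nil_of_length_eq_zero (by omega)
  simp [hs, ht]

lemma isFactor_iff {x w : Word} :
    IsFactor x w ↔ ∃ i, i + x.length ≤ w.length ∧ x = (w.drop i).take x.length := by
  constructor
  · rintro ⟨s, t, rfl⟩
    refine ⟨s.length, by simp, ?_⟩
    rw [List.append_assoc, List.drop_left, List.take_left]
  · rintro ⟨i, hle, hx⟩
    refine ⟨w.take i, w.drop (i + x.length), ?_⟩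
    have h1 : w.take i ++ w.drop i = w := List.take_append_drop i w
    have h2 : (w.drop i).take x.length ++ (w.drop i).drop x.length = w.drop i :=
      List.take_append_drop x.length (w.drop i)
    have h3 : (w.drop i).drop x.length = w.drop (i + x.length) := by
      rw [List.drop_drop]; try (congr 1; omega)
    rw [← hx, h3] at h2
    rw [List.append_assoc, h2, h1]

lemma factor_append {x u v : Word} (h : IsFactor x (u ++ v)) :
    IsFactor x u ∨ IsFactor x v ∨
      ∃ s p, x = s ++ p ∧ s ≠ [] ∧ s <:+ u ∧ p <+: v := by
  rw [isFactor_iff] at h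
  obtain ⟨i, hle, hx⟩ := h
  rw [List.length_append] at hle
  by_cases h1 : i + x.length ≤ u.length
  · left
    rw [isFactor_iff]
    refine ⟨i, h1, ?_⟩
    rw [List.drop_append, show i - u.length = 0 by omega, List.drop_zero,
      List.take_append, show x.length - (u.drop i).length = 0 by
        simp only [List.length_drop]; omega, List.take_zero, List.append_nil] at hx
    exact hx
  · by_cases h2 : u.length ≤ i
    · right; left
      rw [isFactor_iff]
      refine ⟨i - u.length, by omega, ?_⟩
      rw [List.drop_append, List.drop_eq_nil_of_le (by omega),
        List.nil_append] at hx
      exact hx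
    · right; right
      push_neg at h1 h2
      refine ⟨u.drop i, v.take (i + x.length - u.length), ?_, ?_, List.drop_suffix _ _,
        List.take_prefix _ _⟩
      · rw [List.drop_append, show i - u.length = 0 by omega, List.drop_zero,
          List.take_append] at hx
        refine hx.trans ?_
        rw [List.take_of_length_le (l := u.drop i) (by simp only [List.length_drop]; omega)]
        congr 2
        simp only [List.length_drop]
        omega
      · intro hnil
        have := congrArg List.length hnil
        simp [List.length_drop] at this
        omega

lemma prefix_join : ∀ (l : List Word) (p : Word), p <+: l.flatten →
    ∃ (q : List Word) (p' : Word), (∀ u ∈ q, u ∈ l) ∧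
      (p' = [] ∨ ∃ u ∈ l, p' <+: u) ∧ p = q.flatten ++ p' := by
  intro l
  induction l with
  | nil =>
    intro p hp
    simp only [List.flatten_nil, List.prefix_nil] at hp
    exact ⟨[], [], by simp, Or.inl rfl, by simp [hp]⟩
  | cons u r ih =>
    intro p hp
    replace hp : p <+: u ++ r.flatten := hp
    by_cases hlen : p.length ≤ u.length
    · refine ⟨[], p, by simp, Or.inr ⟨u, by simp, ?_⟩, by simp⟩
      exact List.prefix_of_prefix_length_le hp (by simp) hlen
    · push_neg at hlen
      have hu : u <+: p := List.prefix_of_prefix_length_le (by simp) hp (by omega)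
      obtain ⟨t, rfl⟩ := hu
      have ht : t <+: r.flatten := by
        have := hp
        rwa [List.prefix_append_right_inj] at this
      obtain ⟨q, p', hq, hp', rfl⟩ := ih t ht
      refine ⟨u :: q, p', ?_, ?_, by simp⟩
      · intro v hv
        rcases List.mem_cons.mp hv with hv | hv
        · simp [hv]
        · simp only [List.mem_cons]
          exact Or.inr (hq v hv)
      · rcases hp' with h | ⟨w, hw, hpre⟩
        · exact Or.inl h
        · exact Or.inr ⟨w, by simp [hw], hpre⟩

lemma decomp : ∀ (k n : ℕ), 1 ≤ n → n ≤ k →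
    (∀ w ∈ Aset k, ∃ l : List Word, (∀ u ∈ l, u ∈ Aset n ∪ Bset n) ∧ w = l.flatten) ∧
    (∀ w ∈ Bset k, ∃ l : List Word, (∀ u ∈ l, u ∈ Aset n ∪ Bset n) ∧ w = l.flatten) := by
  intro k
  induction k using Nat.strong_induction_on with
  | _ k ihk =>
    intro n hn hnk
    by_cases heq : n = k
    · subst heq
      constructor
      · intro w hw
        exact ⟨[w], by intro u hu; simp at hu; subst hu; exact Or.inl hw, by simp⟩
      · intro w hw
        exact ⟨[w], by intro u hu; simp at hu; subst hu; exact Or.inr hw, by simp⟩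
    · have hlt : n < k := lt_of_le_of_ne hnk heq
      have hk2 : 2 ≤ k := by omega
      obtain ⟨j, rfl⟩ : ∃ j, k = j + 2 := ⟨k - 2, by omega⟩
      obtain ⟨ihA, ihB⟩ := ihk (j+1) (by omega) n hn (by omega)
      constructor
      · intro w hw
        rw [AsetSucc j] at hw
        obtain ⟨b, hb, v, ⟨a1, ha1, a2, ha2, rfl⟩, rfl⟩ := hw
        obtain ⟨lb, hlb, rfl⟩ := ihB b hb
        obtain ⟨l1, hl1, rfl⟩ := ihA a1 ha1
        obtain ⟨l2, hl2, rfl⟩ := ihA a2 ha2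
        refine ⟨lb ++ l1 ++ l2, ?_, by simp⟩
        intro u hu
        simp only [List.mem_append] at hu
        rcases hu with (hu | hu) | hu
        exacts [hlb u hu, hl1 u hu, hl2 u hu]
      · intro w hw
        rw [BsetSucc j] at hw
        rcases hw with ⟨a, ha, b, hb, rfl⟩ | ⟨b, hb, a, ha, rfl⟩ <;>
          [(obtain ⟨la, hla, rfl⟩ := ihA a ha; obtain ⟨lb, hlb, rfl⟩ := ihB b hb;
            refine ⟨la ++ lb, ?_, by simp⟩);
           (obtain ⟨lb, hlb, rfl⟩ := ihB b hb; obtain ⟨la, hla, rfl⟩ := ihA a ha;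
            refine ⟨lb ++ la, ?_, by simp⟩)] <;>
        · intro u hu
          simp only [List.mem_append] at hu
          rcases hu with hu | hu
          first
          | exacts [hla u hu, hlb u hu]
          | exacts [hlb u hu, hla u hu]

/-! ### The covering of `FA` by suffix–prefix concatenations -/

def T2set (n : ℕ) : Set Word :=
  ⋃ i ∈ Finset.range (Nat.fib (2*n)+1),
    concatSet (SufSet (Aset n ∪ Bset n) i) (PreSet (Aset n ∪ Bset n) (Nat.fib (2*n) - i))

def T3set (n : ℕ) : Set Word :=
  ⋃ i ∈ Finset.range (Nat.fib (2*n-2)+1),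
    concatSet (SufSet (Aset n ∪ Bset n) i)
      (concatSet (Bset n) (PreSet (Aset n ∪ Bset n) (Nat.fib (2*n-2) - i)))

lemma main_incl {n : ℕ} (hn : 2 ≤ n) : ∀ (l : List Word),
    (∀ u ∈ l, u ∈ Aset n ∪ Bset n) → ∀ x : Word, x.length = Nat.fib (2*n) →
    IsFactor x l.flatten → x ∈ T2set n ∪ T3set n := by
  have hrec : Nat.fib (2*n) = Nat.fib (2*n-2) + Nat.fib (2*n-1) :=
    fib_eq3 (2*n) (2*n-1) (2*n-2) (by omega) (by omega)
  have h21 : Nat.fib (2*n-2) ≤ Nat.fib (2*n-1) := Nat.fib_mono (by omega)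
  have hfn2pos : 1 ≤ Nat.fib (2*n-2) := Nat.fib_pos.mpr (by omega)
  have hblen : ∀ u ∈ Aset n ∪ Bset n,
      Nat.fib (2*n-1) ≤ u.length ∧ u.length ≤ Nat.fib (2*n) := by
    rintro u (hu | hu)
    · rw [len_A hu]; omega
    · rw [len_B hu]; omega
  obtain ⟨w0, hw0⟩ : (Aset n ∪ Bset n).Nonempty := by
    obtain ⟨⟨wa, hwa⟩, -⟩ := nonempty_AB n (by omega)
    exact ⟨wa, Or.inl hwa⟩
  have hpre_mem : ∀ (p : Word) (j : ℕ), p.length = j →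
      (p = [] ∨ ∃ w ∈ Aset n ∪ Bset n, p <+: w) → p ∈ PreSet (Aset n ∪ Bset n) j := by
    rintro p j hlen (rfl | ⟨w, hw, hpre⟩)
    · exact ⟨hlen, w0, hw0, List.nil_prefix⟩
    · exact ⟨hlen, w, hw, hpre⟩
  intro l
  induction l with
  | nil =>
    intro _ x hxlen hf
    have h0 := isFactor_len hf
    simp only [List.flatten_nil, List.length_nil] at h0
    have h1 : 1 ≤ Nat.fib (2*n) := Nat.fib_pos.mpr (by omega)
    omega
  | cons u r ih =>
    intro hbl x hxlen hf
    replace hf : IsFactor x (u ++ r.flatten) := hf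
    have hu : u ∈ Aset n ∪ Bset n := hbl u (by simp)
    rcases factor_append hf with hf1 | hf1 | ⟨s, p, hxsp, hsne, hsuf, hppre⟩
    · -- factor of the first block
      rcases hu with huA | huB
      · have hxu : x = u := isFactor_eq hf1 (by rw [hxlen, len_A huA])
        left
        refine Set.mem_biUnion (Finset.self_mem_range_succ (Nat.fib (2*n))) ?_
        refine ⟨x, ⟨hxlen, u, Or.inl huA, hxu ▸ List.suffix_refl u⟩, [],
          hpre_mem [] _ (by simp) (Or.inl rfl), by simp⟩
      · exfalso
        have hle := isFactor_len hf1
        rw [hxlen, len_B huB] at hle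
        have : Nat.fib (2*n-1) < Nat.fib (2*n) := by
          have := (Nat.fib_lt_fib (show 2 ≤ 2*n-1 by omega) (n := 2*n)).mpr (by omega)
          exact this
        omega
    · -- factor of the rest
      exact ih (fun v hv => hbl v (by simp [hv])) x hxlen hf1
    · -- straddles the boundary
      obtain ⟨q, p'', hq, hp'', hpeq⟩ := prefix_join r p hppre
      have hslen : s.length ≤ u.length := hsuf.length_le
      have hulen := hblen u hu
      have hsp : s.length + p.length = Nat.fib (2*n) := by
        rw [← hxlen, hxsp, List.length_append]
      have hs1 : 1 ≤ s.length := List.length_pos_iff.mpr hsne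
      match q, hpeq with
      | [], hpeq =>
        simp only [List.flatten_nil, List.nil_append] at hpeq
        subst hpeq
        left
        refine Set.mem_biUnion (Finset.mem_range.mpr (show s.length < Nat.fib (2*n)+1 by omega)) ?_
        refine ⟨s, ⟨rfl, u, hu, hsuf⟩, p, hpre_mem p _ (by omega) ?_, hxsp⟩
        rcases hp'' with rfl | ⟨w, hw, hpre⟩
        · exact Or.inl rfl
        · exact Or.inr ⟨w, hbl w (by simp [hw]), hpre⟩
      | u' :: q', hpeq =>
        have hu' : u' ∈ Aset n ∪ Bset n := hbl u' (by
          have := hq u' (by simp)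
          simp [this])
        have hu'len := hblen u' hu'
        match q', hpeq with
        | v :: rest, hpeq =>
          exfalso
          have hv : v ∈ Aset n ∪ Bset n := hbl v (by
            have := hq v (by simp)
            simp [this])
          have hvlen := hblen v hv
          have : p.length = u'.length + (v.length + (rest.flatten.length + p''.length)) := by
            rw [hpeq]; simp
          omega
        | [], hpeq =>
          simp only [List.flatten_cons, List.flatten_nil, List.append_nil] at hpeq
          rcases hu' with huA' | huB'
          · exfalso
            have : p.length = u'.length + p''.length := by rw [hpeq]; simp
            rw [len_A huA'] at this
            omega
          · right
            have hu'l : u'.length = Nat.fib (2*n-1) := len_B huB'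
            have hp''len : p''.length = Nat.fib (2*n-2) - s.length := by
              have : p.length = u'.length + p''.length := by rw [hpeq]; simp
              omega
            have hsle2 : s.length ≤ Nat.fib (2*n-2) := by
              have : p.length = u'.length + p''.length := by rw [hpeq]; simp
              omega
            refine Set.mem_biUnion (Finset.mem_range.mpr
              (show s.length < Nat.fib (2*n-2)+1 by omega)) ?_
            refine ⟨s, ⟨rfl, u, hu, hsuf⟩, u' ++ p'',
              ⟨u', huB', p'', hpre_mem p'' _ hp''len ?_, rfl⟩, ?_⟩
            · rcases hp'' with rfl | ⟨w, hw, hpre⟩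
              · exact Or.inl rfl
              · exact Or.inr ⟨w, hbl w (by simp [hw]), hpre⟩
            · rw [hxsp, hpeq]

/-! ### Final assembly -/

lemma FA_subset {n : ℕ} (hn : 2 ≤ n) : FA (Nat.fib (2*n)) ⊆ T2set n ∪ T3set n := by
  intro x hx
  simp only [FA, Set.mem_iUnion, Set.mem_setOf_eq] at hx
  obtain ⟨k, hk1, hxlen, w, hw, hf⟩ := hx
  by_cases hkn : k < n
  · exfalso
    have h1 := isFactor_len hf
    rw [hxlen, len_A hw] at h1
    have h2 : Nat.fib (2*k) < Nat.fib (2*n) :=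
      (Nat.fib_lt_fib (show 2 ≤ 2*k by omega) (n := 2*n)).mpr (by omega)
    omega
  · push_neg at hkn
    obtain ⟨l, hl, rfl⟩ := (decomp k n (by omega) hkn).1 w hw
    exact main_incl hn l hl x hxlen hf

lemma ncard_biUnion_le {ι : Type} (s : Finset ι) (f : ι → Set Word) :
    (⋃ i ∈ s, f i).ncard ≤ ∑ i ∈ s, (f i).ncard := by
  classical
  induction s using Finset.induction_on with
  | empty => simp
  | @insert a s ha ih =>
    rw [Finset.set_biUnion_insert, Finset.sum_insert ha]
    exact le_trans (Set.ncard_union_le _ _) (Nat.add_le_add le_rfl ih)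

lemma card_len_words : ∀ m : ℕ, ({w : Word | w.length = m}).ncard ≤ 2^m := by
  intro m
  induction m with
  | zero =>
    have h : {w : Word | w.length = 0} = {([] : Word)} := by
      ext w; simp [List.length_eq_zero_iff]
    rw [h, Set.ncard_singleton]
    norm_num
  | succ m ih =>
    have hsub : {w : Word | w.length = m+1} ⊆
        (List.cons Letter.a '' {w : Word | w.length = m}) ∪
        (List.cons Letter.b '' {w : Word | w.length = m}) := by
      intro w hw
      match w with
      | [] => simp at hw
      | c :: w' =>
        have hw' : w'.length = m := by simpa using hw
        cases c
        · exact Or.inl ⟨w', hw', rfl⟩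
        · exact Or.inr ⟨w', hw', rfl⟩
    refine le_trans (Set.ncard_le_ncard hsub
      (((wordLenFin m).image _).union ((wordLenFin m).image _))) ?_
    refine le_trans (Set.ncard_union_le _ _) ?_
    have h1 := Set.ncard_image_le (f := List.cons Letter.a) (wordLenFin m)
    have h2 := Set.ncard_image_le (f := List.cons Letter.b) (wordLenFin m)
    calc _ ≤ 2^m + 2^m := Nat.add_le_add (le_trans h1 ih) (le_trans h2 ih)
      _ = 2^(m+1) := by rw [pow_succ]; omega

lemma numeric : ∀ m : ℕ, 2 ≤ m →
    2*Nat.fib (2*m+4) + 4*Nat.fib (2*m+2) + 6 ≤ 5^(m+1) := by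
  intro m hm
  induction m, hm using Nat.le_induction with
  | base =>
    have h8 : Nat.fib 8 = 21 := by decide
    have h6 : Nat.fib 6 = 8 := by decide
    norm_num [h8, h6]
  | succ m hm ih =>
    have e1 := fib_eq3 (2*m+6) (2*m+5) (2*m+4) (by omega) (by omega)
    have e2 := fib_eq3 (2*m+5) (2*m+4) (2*m+3) (by omega) (by omega)
    have e3 := fib_eq3 (2*m+4) (2*m+3) (2*m+2) (by omega) (by omega)
    have h5 : (5:ℕ)^(m+1+1) = 5 * 5^(m+1) := by rw [pow_succ]; ring
    have hmono : Nat.fib (2*m+3) ≤ Nat.fib (2*m+4) := Nat.fib_mono (by omega)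
    have hidx1 : 2*(m+1)+4 = 2*m+6 := by omega
    have hidx2 : 2*(m+1)+2 = 2*m+4 := by omega
    rw [hidx1, hidx2, h5]
    omega


theorem card_FA_le (n : ℕ) (hn : 2 ≤ n) :
    (FA (Nat.fib (2 * n))).ncard ≤ 2 ^ (Nat.fib (2 * n - 3) + 2 * n) * 5 ^ (n - 1) := by
  obtain ⟨m, rfl⟩ : ∃ m, n = m + 2 := ⟨n - 2, by omega⟩
  -- abbreviations
  set n := m + 2 with hn2
  have hidx3 : 2*n - 3 = 2*m+1 := by omega
  have hidxn : n - 1 = m + 1 := by omega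
  rw [hidx3, hidxn]
  by_cases hm2 : m < 2
  · -- small cases: trivial bound 2^(fib (2n))
    have hsub : FA (Nat.fib (2*n)) ⊆ {w : Word | w.length = Nat.fib (2*n)} := by
      intro x hx
      simp only [FA, Set.mem_iUnion, Set.mem_setOf_eq] at hx
      obtain ⟨k, hk1, hxlen, -⟩ := hx
      exact hxlen
    have h1 := le_trans (Set.ncard_le_ncard hsub (wordLenFin _)) (card_len_words _)
    interval_cases m
    · -- n = 2
      have h4 : Nat.fib 4 = 3 := by decide
      have hf1 : Nat.fib 1 = 1 := by decide
      simp only [hn2] at h1 ⊢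
      norm_num [h4, hf1] at h1 ⊢
      omega
    · -- n = 3
      have h6 : Nat.fib 6 = 8 := by decide
      have hf3 : Nat.fib 3 = 2 := by decide
      simp only [hn2] at h1 ⊢
      norm_num [h6, hf3] at h1 ⊢
      omega
  · push_neg at hm2
    -- main case : m ≥ 2, n = m+2 ≥ 4
    have hAB : ∀ t, (PreSet (Aset n ∪ Bset n) t).ncard ≤ 2^(eF t + m+3) ∧
        (SufSet (Aset n ∪ Bset n) t).ncard ≤ 2^(eF t + m+3) := by
      intro t
      have hPB := PB (m+1) t
      constructor
      · rw [preSet_union]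
        refine le_trans (Set.ncard_union_le _ _) ?_
        calc _ ≤ 2^(eF t + (m+1)) + 2^(eF t + (m+1) + 1) :=
              Nat.add_le_add hPB.1 hPB.2.1
          _ ≤ 2^(eF t + m+2) + 2^(eF t + m+2) :=
              Nat.add_le_add (pow2_le (by omega)) (pow2_le (by omega))
          _ ≤ 2^(eF t + m+3) := by
              have h2 : (2:ℕ)^(eF t + m + 2) + 2^(eF t + m + 2) = 2^(eF t + m + 3) := by
                rw [show eF t + m + 3 = (eF t + m + 2) + 1 by omega, pow_succ]; ring
              omega
      · rw [sufSet_union]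
        refine le_trans (Set.ncard_union_le _ _) ?_
        calc _ ≤ 2^(eF t + (m+1)) + 2^(eF t + (m+1) + 1) :=
              Nat.add_le_add hPB.2.2.1 hPB.2.2.2
          _ ≤ 2^(eF t + m+2) + 2^(eF t + m+2) :=
              Nat.add_le_add (pow2_le (by omega)) (pow2_le (by omega))
          _ ≤ 2^(eF t + m+3) := by
              have h2 : (2:ℕ)^(eF t + m + 2) + 2^(eF t + m + 2) = 2^(eF t + m + 3) := by
                rw [show eF t + m + 3 = (eF t + m + 2) + 1 by omega, pow_succ]; ring
              omega
    have hβ : (Bset n).ncard ≤ 2^(Nat.fib (2*m)+1) := by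
      have := (cardAB m).2
      exact this
    -- eF bounds
    have hEfn : eF (Nat.fib (2*n)) ≤ Nat.fib (2*m+1) - 1 := by
      have h := eF_even_upper m
      have : 2*n = 2*m+4 := by omega
      rw [this]
      omega
    have hEfn2 : eF (Nat.fib (2*n-2)) ≤ Nat.fib (2*m-1) - 1 := by
      have h := eF_even_upper (m-1)
      have h1 : 2*(m-1)+4 = 2*n-2 := by omega
      have h2 : 2*(m-1)+1 = 2*m-1 := by omega
      rw [h1, h2] at h
      omega
    have hfibm : Nat.fib (2*m+1) = Nat.fib (2*m-1) + Nat.fib (2*m) := by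
      have := fib_eq3 (2*m+1) (2*m) (2*m-1) (by omega) (by omega)
      omega
    have hfm1pos : 1 ≤ Nat.fib (2*m-1) := Nat.fib_pos.mpr (by omega)
    -- bound each T2 term
    have hT2 : (T2set n).ncard ≤ (Nat.fib (2*n)+1) * 2^(Nat.fib (2*m+1) + 2*m+5) := by
      refine le_trans (ncard_biUnion_le _ _) ?_
      have hterm : ∀ i ∈ Finset.range (Nat.fib (2*n)+1),
          (concatSet (SufSet (Aset n ∪ Bset n) i)
            (PreSet (Aset n ∪ Bset n) (Nat.fib (2*n) - i))).ncard ≤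
          2^(Nat.fib (2*m+1) + 2*m+5) := by
        intro i hi
        rw [Finset.mem_range] at hi
        refine ncard_concat_pow (le_refl _) (sufSet_finite _ _) (preSet_finite _ _)
          (hAB i).2 (hAB (Nat.fib (2*n) - i)).1 ?_
        have hg := eF_gap (show i ≤ Nat.fib (2*n) by omega)
        omega
      calc _ ≤ ∑ _i ∈ Finset.range (Nat.fib (2*n)+1), 2^(Nat.fib (2*m+1) + 2*m+5) :=
            Finset.sum_le_sum hterm
        _ = (Nat.fib (2*n)+1) * 2^(Nat.fib (2*m+1) + 2*m+5) := by
            rw [Finset.sum_const, Finset.card_range, smul_eq_mul]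
    -- bound each T3 term
    have hT3 : (T3set n).ncard ≤ (Nat.fib (2*n-2)+1) * 2^(Nat.fib (2*m+1) + 2*m+6) := by
      refine le_trans (ncard_biUnion_le _ _) ?_
      have hterm : ∀ i ∈ Finset.range (Nat.fib (2*n-2)+1),
          (concatSet (SufSet (Aset n ∪ Bset n) i)
            (concatSet (Bset n) (PreSet (Aset n ∪ Bset n) (Nat.fib (2*n-2) - i)))).ncard ≤
          2^(Nat.fib (2*m+1) + 2*m+6) := by
        intro i hi
        rw [Finset.mem_range] at hi
        have hinner : (concatSet (Bset n) (PreSet (Aset n ∪ Bset n)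
            (Nat.fib (2*n-2) - i))).ncard ≤
            2^((Nat.fib (2*m)+1) + (eF (Nat.fib (2*n-2) - i) + m+3)) :=
          ncard_concat_pow (le_refl _) (finite_B n) (preSet_finite _ _) hβ
            (hAB (Nat.fib (2*n-2) - i)).1 (le_refl _)
        refine ncard_concat_pow (le_refl _) (sufSet_finite _ _)
          (concat_finite (finite_B n) (preSet_finite _ _)) (hAB i).2 hinner ?_
        have hg := eF_gap (show i ≤ Nat.fib (2*n-2) by omega)
        omega
      calc _ ≤ ∑ _i ∈ Finset.range (Nat.fib (2*n-2)+1), 2^(Nat.fib (2*m+1) + 2*m+6) :=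
            Finset.sum_le_sum hterm
        _ = (Nat.fib (2*n-2)+1) * 2^(Nat.fib (2*m+1) + 2*m+6) := by
            rw [Finset.sum_const, Finset.card_range, smul_eq_mul]
    -- put everything together
    have hfin : (T2set n ∪ T3set n).Finite := by
      refine Set.Finite.union ?_ ?_ <;>
      · refine Set.Finite.biUnion (Finset.finite_toSet _) ?_
        intro i _
        first
        | exact concat_finite (sufSet_finite _ _) (preSet_finite _ _)
        | exact concat_finite (sufSet_finite _ _)
            (concat_finite (finite_B n) (preSet_finite _ _))
    calc (FA (Nat.fib (2*n))).ncard ≤ (T2set n ∪ T3set n).ncard :=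
          Set.ncard_le_ncard (FA_subset (by omega)) hfin
      _ ≤ (T2set n).ncard + (T3set n).ncard := Set.ncard_union_le _ _
      _ ≤ (Nat.fib (2*n)+1) * 2^(Nat.fib (2*m+1) + 2*m+5) +
          (Nat.fib (2*n-2)+1) * 2^(Nat.fib (2*m+1) + 2*m+6) := Nat.add_le_add hT2 hT3
      _ = (2*(Nat.fib (2*n)+1) + 4*(Nat.fib (2*n-2)+1)) * 2^(Nat.fib (2*m+1) + 2*m+4) := by
          rw [show Nat.fib (2*m+1) + 2*m+5 = (Nat.fib (2*m+1) + 2*m+4)+1 by omega,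
            show Nat.fib (2*m+1) + 2*m+6 = (Nat.fib (2*m+1) + 2*m+4)+1+1 by omega,
            pow_succ, pow_succ]
          ring
      _ ≤ 5^(m+1) * 2^(Nat.fib (2*m+1) + 2*m+4) := by
          refine Nat.mul_le_mul_right _ ?_
          have hnum := numeric m hm2
          have hi1 : 2*n = 2*m+4 := by omega
          have hi2 : 2*n-2 = 2*m+2 := by omega
          rw [hi2, hi1]
          omega
      _ = 2^(Nat.fib (2*m+1) + 2*(m+2)) * 5^(m+1) := by
          rw [show Nat.fib (2*m+1) + 2*m+4 = Nat.fib (2*m+1) + 2*(m+2) by omega]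
          ring
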